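/- For every crossingless matching a ∈ B^n, the component K_a admits the alternative description K_a = {(L_1,…,L_{2n}) ∈ Y_{2n} : L_{s_a(j)} = z^{−d_a(j)} L_{j−1} for all j ∈ O_a}, where z^{−d} denotes the d-fold preimage under z (in the ambient space E). In particular, every (L_1,…,L_{2n}) ∈ Y_{2n} satisfying these preimage conditions automatically satisfies L_{2n} = E_n. -/

import Mathlib

open scoped ComplexInnerProductSpace

open Fin.NatCast

noncomputable section

abbrev E (N : ℕ) := EuclideanSpace ℂ (Fin N ⊕ Fin N)

def zmap (N : ℕ) : E N →ₗ[ℂ] E N where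
  toFun v := WithLp.toLp 2 fun i =>
    match i with
    | Sum.inl j => if h : (j : ℕ) + 1 < N then v (Sum.inl ⟨(j : ℕ) + 1, h⟩) else 0
    | Sum.inr j => if h : (j : ℕ) + 1 < N then v (Sum.inr ⟨(j : ℕ) + 1, h⟩) else 0
  map_add' u v := by
    apply PiLp.ext; intro i
    rcases i with j | j <;> simp only [PiLp.add_apply, PiLp.toLp_apply] <;> split <;> simp
  map_smul' c v := by
    apply PiLp.ext; intro i
    rcases i with j | j <;> simp only [PiLp.smul_apply, PiLp.toLp_apply, RingHom.id_apply, smul_eq_mul] <;>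
      split <;> simp

def Cmap (N : ℕ) : E N →ₗ[ℂ] EuclideanSpace ℂ (Fin 2) where
  toFun v := WithLp.toLp 2 fun i => if i = 0 then ∑ j : Fin N, v (Sum.inl j) else ∑ j : Fin N, v (Sum.inr j)
  map_add' u v := by
    apply PiLp.ext; intro i
    by_cases h : i = (0 : Fin 2) <;> simp [h, PiLp.add_apply, Finset.sum_add_distrib]
  map_smul' c v := by
    apply PiLp.ext; intro i
    by_cases h : i = (0 : Fin 2) <;> simp [h, PiLp.smul_apply, Finset.mul_sum]

/-- `Ym N m` : complete flags `0 = L_0 ⊊ L_1 ⊊ … ⊊ L_m` of `z`-stable subspaces of `E`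
with `dim L_j = j`.  A tuple `(L_1,…,L_m) ∈ Y_m` is encoded as the function
`L : Fin (m+1) → Submodule ℂ (E N)` with the convention `L 0 = 0`. -/
def Ym (N m : ℕ) : Set (Fin (m + 1) → Submodule ℂ (E N)) :=
  {L | L 0 = ⊥ ∧ StrictMono L ∧ (∀ j : Fin (m + 1), Module.finrank ℂ (L j) = (j : ℕ)) ∧
    ∀ j : Fin (m + 1), (L j).map (zmap N) ≤ L j}

/-- The map `φ_m`, in coordinates: `φ_m(L)_j = C(L_{j+1} ∩ L_j^⊥)` (0-based `j`),
i.e. the tuple `(C(L_1), C(L_2 ∩ L_1^⊥), …, C(L_m ∩ L_{m-1}^⊥))`. -/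
def phiRaw (N m : ℕ) (L : Fin (m + 1) → Submodule ℂ (E N)) :
    Fin m → Submodule ℂ (EuclideanSpace ℂ (Fin 2)) :=
  fun j => ((L j.succ) ⊓ (L j.castSucc)ᗮ).map (Cmap N)

/-- `X_{m,i} = {(L_1,…,L_m) ∈ Y_m : L_{i+1} = z^{-1}(L_{i-1})}` (with `L_0 = 0`). -/
def Xmi (N m i : ℕ) : Set (Fin (m + 1) → Submodule ℂ (E N)) :=
  {L | L ∈ Ym N m ∧ ∀ (h : i + 1 < m + 1) (h' : i - 1 < m + 1),
    L ⟨i + 1, h⟩ = (L ⟨i - 1, h'⟩).comap (zmap N)}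

/-- `A_{m,i} = {(l_1,…,l_m) ∈ (ℙ¹)^m : l_{i+1} = l_i^⊥}`; a point of `(ℙ¹)^m` is encoded
as a tuple of rank-one subspaces of `ℂ²`, the line `l_k` sitting at 0-based index `k-1`. -/
def Ami (m i : ℕ) : Set (Fin m → Submodule ℂ (EuclideanSpace ℂ (Fin 2))) :=
  {l | (∀ j, Module.finrank ℂ (l j) = 1) ∧
    ∀ (h : i < m) (h' : i - 1 < m), l ⟨i, h⟩ = (l ⟨i - 1, h'⟩)ᗮ}

/-- `q_{m,i}(L_1,…,L_m) = (L_1,…,L_{i-1}, zL_{i+2},…,zL_m)`. -/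
def qRaw (N m i : ℕ) (hm : 2 ≤ m) (L : Fin (m + 1) → Submodule ℂ (E N)) :
    Fin (m - 2 + 1) → Submodule ℂ (E N) :=
  fun j =>
    if (j : ℕ) < i then L ⟨(j : ℕ), by have := j.isLt; omega⟩
    else (L ⟨(j : ℕ) + 2, by have := j.isLt; omega⟩).map (zmap N)

/-- The forgetful map `g_{m,i}(l_1,…,l_m) = (l_1,…,l_{i-1}, l_{i+2},…,l_m)`. -/
def gRaw (m i : ℕ) (l : Fin m → Submodule ℂ (EuclideanSpace ℂ (Fin 2))) :
    Fin (m - 2) → Submodule ℂ (EuclideanSpace ℂ (Fin 2)) :=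
  fun k =>
    if (k : ℕ) + 1 < i then l ⟨(k : ℕ), by have := k.isLt; omega⟩
    else l ⟨(k : ℕ) + 2, by have := k.isLt; omega⟩

/-- The involution `I_{2n}` of `(ℙ¹)^m`: `l_j ↦ l_j` for `j` odd, `l_j ↦ l_j^⊥` for `j` even
(the line `l_j` sits at 0-based index `j-1`). -/
def Imap (m : ℕ) (l : Fin m → Submodule ℂ (EuclideanSpace ℂ (Fin 2))) :
    Fin m → Submodule ℂ (EuclideanSpace ℂ (Fin 2)) :=
  fun k => if (k : ℕ) % 2 = 0 then l k else (l k)ᗮ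

/-- A crossingless matching of the `2n` points `{1,…,2n}`: a partition of `{1,…,2n}` into
`n` pairs (each pair recorded as `(i,j)` with `i < j`) such that there is no quadruple
`i < j < k < l` with `(i,k)` and `(j,l)` paired. -/
structure CrossinglessMatching (n : ℕ) where
  pairs : Finset (ℕ × ℕ)
  card_eq : pairs.card = n
  lt : ∀ p ∈ pairs, p.1 < p.2
  mem_range : ∀ p ∈ pairs, 1 ≤ p.1 ∧ p.2 ≤ 2 * n
  cover : ∀ k, 1 ≤ k → k ≤ 2 * n → ∃! p, p ∈ pairs ∧ (p.1 = k ∨ p.2 = k)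
  noncross : ∀ i j k l : ℕ, i < j → j < k → k < l → (i, k) ∈ pairs → (j, l) ∉ pairs

/-- `{(L_1,…,L_m) ∈ Y_m : L_{s_a(j)} = z^{-d_a(j)} L_{j-1} for all j ∈ O_a}`, where for a
pair `(i,j)` of the matching, `s_a(i) = j`, `d_a(i) = (j-i+1)/2`, and `z^{-d}` is the
`d`-fold preimage under `z`. -/
def KaSet (N m : ℕ) (pairs : Finset (ℕ × ℕ)) : Set (Fin (m + 1) → Submodule ℂ (E N)) :=
  {L | L ∈ Ym N m ∧ ∀ p ∈ pairs,
    L ((p.2 : Fin (m + 1))) =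
      (L ((p.1 - 1 : ℕ) : Fin (m + 1))).comap ((zmap N) ^ ((p.2 - p.1 + 1) / 2))}

/-- `S_a = {(l_1,…,l_{2n}) ∈ (ℙ¹)^{2n} : l_{s_a(j)} = l_j ∀ j ∈ O_a}` (0-based indexing, so
`l_k` sits at index `k-1`). -/
def SaSet (m : ℕ) (pairs : Finset (ℕ × ℕ)) :
    Set (Fin m → Submodule ℂ (EuclideanSpace ℂ (Fin 2))) :=
  {l | (∀ j, Module.finrank ℂ (l j) = 1) ∧
    ∀ p ∈ pairs, ∀ (h2 : p.2 - 1 < m) (h1 : p.1 - 1 < m), l ⟨p.2 - 1, h2⟩ = l ⟨p.1 - 1, h1⟩}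

/-- `T_a = {(l_1,…,l_{2n}) ∈ (ℙ¹)^{2n} : l_{s_a(j)} = l_j^⊥ ∀ j ∈ O_a}`. -/
def TaSet (m : ℕ) (pairs : Finset (ℕ × ℕ)) :
    Set (Fin m → Submodule ℂ (EuclideanSpace ℂ (Fin 2))) :=
  {l | (∀ j, Module.finrank ℂ (l j) = 1) ∧
    ∀ p ∈ pairs, ∀ (h2 : p.2 - 1 < m) (h1 : p.1 - 1 < m), l ⟨p.2 - 1, h2⟩ = (l ⟨p.1 - 1, h1⟩)ᗮ}

theorem Ka_alt_description (N n : ℕ) (hn : 1 ≤ n) (hN : 2 * n ≤ N)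
    (a : CrossinglessMatching n) :
    {L : Fin (2 * n + 1) → Submodule ℂ (E N) | L ∈ Ym N (2 * n) ∧
      L (Fin.last (2 * n)) = LinearMap.ker ((zmap N) ^ n) ∧
      ∀ p ∈ a.pairs,
        L ((p.2 : Fin (2 * n + 1))) =
          LinearMap.ker ((zmap N) ^ n) ⊓
            (L ((p.1 - 1 : ℕ) : Fin (2 * n + 1))).comap ((zmap N) ^ ((p.2 - p.1 + 1) / 2))}
    = KaSet N (2 * n) a.pairs := by
  have hN2 : 0 < N := by omega
  -- evaluation at the two bottom coordinates
  set e0 : Fin N ⊕ Fin N := Sum.inl ⟨0, hN2⟩ with he0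
  set f0 : Fin N ⊕ Fin N := Sum.inr ⟨0, hN2⟩ with hf0
  have hker_le_two : Module.finrank ℂ (LinearMap.ker (zmap N)) ≤ 2 := by
    let φ : E N →ₗ[ℂ] ℂ × ℂ :=
      { toFun := fun v => (v e0, v f0)
        map_add' := fun u v => by simp [PiLp.add_apply]
        map_smul' := fun c v => by simp [PiLp.smul_apply] }
    have hzero : ∀ v ∈ LinearMap.ker (zmap N), φ v = 0 → v = 0 := by
      intro v hv hφ
      have hz : ∀ i, (zmap N) v i = 0 := by
        intro i; rw [LinearMap.mem_ker.mp hv]; rfl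
      have h1 : v e0 = 0 := congrArg Prod.fst hφ
      have h2 : v f0 = 0 := congrArg Prod.snd hφ
      apply PiLp.ext; intro i
      rcases i with j | j
      · rcases Nat.eq_zero_or_pos (j : ℕ) with hj | hj
        · have : j = ⟨0, hN2⟩ := Fin.ext hj
          rw [this]; exact h1
        · have hlt : (j : ℕ) - 1 < N := by omega
          have := hz (Sum.inl ⟨(j : ℕ) - 1, hlt⟩)
          simp only [zmap, LinearMap.coe_mk, AddHom.coe_mk, PiLp.toLp_apply] at this
          rw [dif_pos (show (j : ℕ) - 1 + 1 < N by omega)] at this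
          have hj' : (⟨(j : ℕ) - 1 + 1, by omega⟩ : Fin N) = j :=
            Fin.ext (show (j : ℕ) - 1 + 1 = (j : ℕ) by omega)
          rwa [hj'] at this
      · rcases Nat.eq_zero_or_pos (j : ℕ) with hj | hj
        · have : j = ⟨0, hN2⟩ := Fin.ext hj
          rw [this]; exact h2
        · have hlt : (j : ℕ) - 1 < N := by omega
          have := hz (Sum.inr ⟨(j : ℕ) - 1, hlt⟩)
          simp only [zmap, LinearMap.coe_mk, AddHom.coe_mk, PiLp.toLp_apply] at this
          rw [dif_pos (show (j : ℕ) - 1 + 1 < N by omega)] at this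
          have hj' : (⟨(j : ℕ) - 1 + 1, by omega⟩ : Fin N) = j :=
            Fin.ext (show (j : ℕ) - 1 + 1 = (j : ℕ) by omega)
          rwa [hj'] at this
    have hinj : Function.Injective (φ.domRestrict (LinearMap.ker (zmap N))) := by
      rw [← LinearMap.ker_eq_bot, Submodule.eq_bot_iff]
      rintro ⟨v, hv⟩ hx
      have hx' : φ v = 0 := by
        have := LinearMap.mem_ker.mp hx
        rwa [LinearMap.domRestrict_apply] at this
      exact Subtype.ext (hzero v hv hx')
    have := LinearMap.finrank_le_finrank_of_injective hinj
    simpa using this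
  -- general bound on the rank of a preimage
  have hcomap_le : ∀ (f : E N →ₗ[ℂ] E N) (U : Submodule ℂ (E N)),
      Module.finrank ℂ (U.comap f) ≤
        Module.finrank ℂ U + Module.finrank ℂ (LinearMap.ker f) := by
    intro f U
    have hmem : ∀ x ∈ U.comap f, f x ∈ U := fun x hx => hx
    have h1 := LinearMap.finrank_range_add_finrank_ker (f.restrict hmem)
    rw [LinearMap.ker_restrict hmem] at h1
    have hkle : LinearMap.ker f ≤ U.comap f := by
      intro x hx
      simp [Submodule.mem_comap, LinearMap.mem_ker.mp hx]
    have heq : Module.finrank ℂ ((LinearMap.ker f).comap (U.comap f).subtype) =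
        Module.finrank ℂ (LinearMap.ker f) :=
      LinearEquiv.finrank_eq (Submodule.comapSubtypeEquivOfLe hkle)
    have h2 : Module.finrank ℂ (LinearMap.range (f.restrict hmem)) ≤
        Module.finrank ℂ U := Submodule.finrank_le _
    omega
  have hcomap_pow_le : ∀ (d : ℕ) (U : Submodule ℂ (E N)),
      Module.finrank ℂ (U.comap ((zmap N) ^ d)) ≤ Module.finrank ℂ U + 2 * d := by
    intro d
    induction d with
    | zero =>
      intro U
      rw [pow_zero, Module.End.one_eq_id, Submodule.comap_id]
      omega
    | succ d ih =>
      intro U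
      have : U.comap ((zmap N) ^ (d + 1)) = (U.comap ((zmap N) ^ d)).comap (zmap N) := by
        rw [pow_succ, Module.End.mul_eq_comp, Submodule.comap_comp]
      rw [this]
      have := hcomap_le (zmap N) (U.comap ((zmap N) ^ d))
      have := ih U
      omega
  ext L
  simp only [Set.mem_setOf_eq, KaSet]
  constructor
  · rintro ⟨hY, hlast, hpair⟩
    refine ⟨hY, fun p hp => ?_⟩
    have hplt := a.lt p hp
    have hpr := a.mem_range p hp
    have hL2 := hpair p hp
    set d := (p.2 - p.1 + 1) / 2 with hd
    set C := (L ((p.1 - 1 : ℕ) : Fin (2 * n + 1))).comap ((zmap N) ^ d) with hC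
    have hle : L ((p.2 : Fin (2 * n + 1))) ≤ C := hL2 ▸ inf_le_right
    have hr2 : Module.finrank ℂ (L ((p.2 : Fin (2 * n + 1)))) = p.2 := by
      have := hY.2.2.1 ((p.2 : Fin (2 * n + 1)))
      rwa [Fin.val_cast_of_lt (n := 2 * n + 1) (by omega)] at this
    have hr1 : Module.finrank ℂ (L ((p.1 - 1 : ℕ) : Fin (2 * n + 1))) = p.1 - 1 := by
      have := hY.2.2.1 (((p.1 - 1 : ℕ) : Fin (2 * n + 1)))
      rwa [Fin.val_cast_of_lt (n := 2 * n + 1) (by omega)] at this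
    have hCle : Module.finrank ℂ C ≤ p.2 := by
      have h := hcomap_pow_le d (L ((p.1 - 1 : ℕ) : Fin (2 * n + 1)))
      rw [hr1, ← hC] at h
      omega
    have : L ((p.2 : Fin (2 * n + 1))) = C :=
      Submodule.eq_of_le_of_finrank_le hle (by omega)
    exact this
  · rintro ⟨hY, hpair⟩
    have hmono := hY.2.1.monotone
    have key : ∀ k, k ≤ 2 * n → (∀ p ∈ a.pairs, p.1 ≤ k ↔ p.2 ≤ k) →
        k % 2 = 0 ∧
          L ((k : ℕ) : Fin (2 * n + 1)) = LinearMap.ker ((zmap N) ^ (k / 2)) := by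
      intro k
      induction k using Nat.strong_induction_on with
      | _ k IH =>
        intro hk2n hclosed
        rcases Nat.eq_zero_or_pos k with rfl | hkpos
        · refine ⟨rfl, ?_⟩
          have h0 : L ((0 : ℕ) : Fin (2 * n + 1)) = ⊥ := by
            simpa using hY.1
          rw [h0]
          simp [Module.End.one_eq_id]
        · obtain ⟨p, ⟨hp, hpk⟩, huniq⟩ := a.cover k hkpos hk2n
          have hplt := a.lt p hp
          have hpr := a.mem_range p hp
          have hp2k : p.2 = k := by
            rcases hpk with h1 | h2
            · have := (hclosed p hp).mp (le_of_eq h1)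
              omega
            · exact h2
          -- parity of this pair via dimension count
          have hL2 := hpair p hp
          set d := (p.2 - p.1 + 1) / 2 with hd
          have hr2 : Module.finrank ℂ (L ((p.2 : Fin (2 * n + 1)))) = p.2 := by
            have := hY.2.2.1 ((p.2 : Fin (2 * n + 1)))
            rwa [Fin.val_cast_of_lt (n := 2 * n + 1) (by omega)] at this
          have hr1 : Module.finrank ℂ (L ((p.1 - 1 : ℕ) : Fin (2 * n + 1))) = p.1 - 1 := by
            have := hY.2.2.1 (((p.1 - 1 : ℕ) : Fin (2 * n + 1)))
            rwa [Fin.val_cast_of_lt (n := 2 * n + 1) (by omega)] at this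
          have hdim : p.2 ≤ p.1 - 1 + 2 * d := by
            have h := hcomap_pow_le d (L ((p.1 - 1 : ℕ) : Fin (2 * n + 1)))
            rw [hr1] at h
            rw [hL2] at hr2
            omega
          have hpar : 2 * d = p.2 - p.1 + 1 := by omega
          -- p.1 - 1 is a closure point
          have hclosed' : ∀ q ∈ a.pairs, q.1 ≤ p.1 - 1 ↔ q.2 ≤ p.1 - 1 := by
            intro q hq
            have hqlt := a.lt q hq
            constructor
            · intro hq1
              by_contra hq2
              push_neg at hq2
              have hq2k : q.2 ≤ k := (hclosed q hq).mp (by omega)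
              have hqnep : q ≠ p := by
                intro h; rw [h] at hq1; omega
              have hq2nek : q.2 ≠ k := by
                intro h
                exact hqnep ((huniq q ⟨hq, Or.inr h⟩).trans
                  (huniq p ⟨hp, Or.inr hp2k⟩).symm)
              have hq2nep1 : q.2 ≠ p.1 := by
                intro h
                obtain ⟨r, _, hruniq⟩ := a.cover p.1 (by omega) (by omega)
                have h1 : q = r := hruniq q ⟨hq, Or.inr h⟩
                have h2 : p = r := hruniq p ⟨hp, Or.inl rfl⟩
                have h3 : q.1 = p.1 := by rw [h1, h2]
                omega
              have hcr := a.noncross q.1 p.1 q.2 p.2 (by omega) (by omega) (by omega)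
              have hq' : (q.1, q.2) ∈ a.pairs := by rwa [Prod.mk.eta]
              have hp' : (p.1, p.2) ∈ a.pairs := by rwa [Prod.mk.eta]
              exact hcr hq' hp'
            · intro h; omega
          obtain ⟨hpar', hLj⟩ := IH (p.1 - 1) (by omega) (by omega) hclosed'
          set m := (p.1 - 1) / 2 with hm
          have hLk : L ((k : ℕ) : Fin (2 * n + 1)) = LinearMap.ker ((zmap N) ^ (m + d)) := by
            rw [← hp2k, hL2, hLj, ← LinearMap.ker_comp, ← Module.End.mul_eq_comp, ← pow_add]
          constructor
          · omega
          · have : k / 2 = m + d := by omega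
            rw [this]
            exact hLk
    have hlastkey := key (2 * n) le_rfl (by
      intro p hp
      have := a.lt p hp
      have := a.mem_range p hp
      constructor <;> intro <;> omega)
    have hcast : ((2 * n : ℕ) : Fin (2 * n + 1)) = Fin.last (2 * n) := by
      apply Fin.ext
      rw [Fin.val_cast_of_lt (n := 2 * n + 1) (by omega)]
      simp
    have hlast : L (Fin.last (2 * n)) = LinearMap.ker ((zmap N) ^ n) := by
      have h := hlastkey.2
      have h2 : 2 * n / 2 = n := by omega
      rw [hcast, h2] at h
      exact h
    refine ⟨hY, hlast, fun p hp => ?_⟩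
    have hL2 := hpair p hp
    have hpr := a.mem_range p hp
    have hle : L ((p.2 : Fin (2 * n + 1))) ≤ LinearMap.ker ((zmap N) ^ n) := by
      rw [← hlast]
      exact hmono (Fin.le_last _)
    exact le_antisymm (le_inf hle (le_of_eq hL2)) (inf_le_right.trans hL2.ge)
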